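/- For any k ≥ 2 and l ∈ ℕ with k + l even, the twisted cubic cylinder W̄_{k,l} contains two vertex-disjoint double rays whose vertex sets together partition the whole vertex set ℤ × ℤ_k; that is, there exist injective maps f₁, f₂ : ℤ → ℤ × ℤ_k with disjoint images whose union is all of ℤ × ℤ_k, such that fᵢ(n) is adjacent to fᵢ(n+1) in W̄_{k,l} for all n ∈ ℤ and i ∈ {1,2}. -/

import Mathlib

/-- One "direction" of the edges of the twisted cubic cylinder `W̄_{k,l}`:
horizontal edges, straight vertical edges and twisted edges. -/
def cylStep (k : ℕ) (l : ℤ) (p q : ℤ × ZMod k) : Prop :=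
  -- horizontal edges {(n,m),(n+1,m)}
  (q.1 = p.1 + 1 ∧ q.2 = p.2) ∨
  -- straight vertical edges
  (∃ (n : ℤ) (m : ℕ), m + 2 ≤ k ∧
    ((Even m ∧ p = (2 * n, (m : ZMod k)) ∧ q = (2 * n, ((m + 1 : ℕ) : ZMod k))) ∨
     (Odd m ∧ p = (2 * n + 1, (m : ZMod k)) ∧ q = (2 * n + 1, ((m + 1 : ℕ) : ZMod k))))) ∨
  -- twisted edges
  ((Even k ∧ ∃ n : ℤ, p = (2 * n + 1, ((k - 1 : ℕ) : ZMod k)) ∧ q = (2 * n + 1 + l, 0)) ∨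
   (Odd k ∧ ∃ n : ℤ, p = (2 * n, ((k - 1 : ℕ) : ZMod k)) ∧ q = (2 * n + l, 0)))

/-- The twisted cubic cylinder `W̄_{k,l}` of height `k` and twist `l`. -/
def twistedCylinder (k : ℕ) (l : ℤ) : SimpleGraph (ℤ × ZMod k) where
  Adj p q := p ≠ q ∧ (cylStep k l p q ∨ cylStep k l q p)
  symm := ⟨by rintro p q ⟨hne, h⟩; exact ⟨hne.symm, h.symm⟩⟩
  loopless := ⟨by rintro p ⟨hne, -⟩; exact hne rfl⟩

namespace TwoRays

def epsF (t m : ℕ) : ℤ := if m < t then 1 else (-1)^(m - t)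

lemma epsF_pm (t m : ℕ) : epsF t m = 1 ∨ epsF t m = -1 := by
  unfold epsF
  split
  · exact Or.inl rfl
  · rcases Nat.even_or_odd (m - t) with h | h
    · exact Or.inl h.neg_one_pow
    · exact Or.inr h.neg_one_pow

/-- generic recursively-defined column sequence -/
def colRec (c₀ : ℤ) (step : ℕ → ℤ) : ℕ → ℤ
  | 0 => c₀
  | m+1 => colRec c₀ step m + step m

lemma colRec_eq_sum (c₀ : ℤ) (step : ℕ → ℤ) (m : ℕ) :
    colRec c₀ step m = c₀ + ∑ r ∈ Finset.range m, step r := by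
  induction m with
  | zero => simp [colRec]
  | succ m ih => rw [colRec, ih, Finset.sum_range_succ]; ring

lemma epsF_sq (t m : ℕ) : epsF t m * epsF t m = 1 := by
  rcases epsF_pm t m with h | h <;> rw [h] <;> ring

lemma altsum (m : ℕ) :
    (∑ r ∈ Finset.range m, (-1:ℤ)^r) = if Even m then 0 else 1 := by
  induction m with
  | zero => simp
  | succ m ih =>
    rw [Finset.sum_range_succ, ih]
    rcases Nat.even_or_odd m with h | h
    · simp [h, Nat.even_add_one, h.neg_one_pow]
    · have h' : ¬ Even m := Nat.not_even_iff_odd.mpr h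
      simp [h', Nat.even_add_one, h.neg_one_pow]

lemma epsF_sum (t k : ℕ) (ht : t ≤ k) (hev : Even (k - t)) :
    (∑ m ∈ Finset.range k, epsF t m) = t := by
  have hsplit := Finset.sum_Ico_consecutive (fun m => epsF t m) (Nat.zero_le t) ht
  have h1 : (∑ m ∈ Finset.Ico 0 t, epsF t m) = (t : ℤ) := by
    have : ∀ m ∈ Finset.Ico 0 t, epsF t m = 1 := by
      intro m hm
      simp only [Finset.mem_Ico] at hm
      simp [epsF, hm.2]
    rw [Finset.sum_congr rfl this]
    simp
  have h2 : (∑ m ∈ Finset.Ico t k, epsF t m) = 0 := by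
    rw [Finset.sum_Ico_eq_sum_range]
    have : ∀ r ∈ Finset.range (k - t), epsF t (t + r) = (-1:ℤ)^r := by
      intro r hr
      simp [epsF, Nat.add_sub_cancel_left]
    rw [Finset.sum_congr rfl this, altsum (k - t), if_pos hev]
  rw [Finset.range_eq_Ico, ← hsplit, h1, h2, add_zero]


def rayFun (k : ℕ) (s u : ℤ) (t : ℕ) (c : ℕ → ℤ) (n : ℤ) : ℤ × ZMod k :=
  (c (n % ((k : ℤ) * u) / u).toNat + (n / ((k : ℤ) * u)) * s
      + epsF t (n % ((k : ℤ) * u) / u).toNat * (n % ((k : ℤ) * u) % u),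
   ((n % ((k : ℤ) * u) / u).toNat : ZMod k))

lemma decomp (k : ℕ) (u : ℤ) (hk : 0 < k) (hu : 0 < u) (n : ℤ) :
    ∃ (j i : ℤ) (m : ℕ), m < k ∧ 0 ≤ i ∧ i < u ∧ n = j * ((k : ℤ) * u) + ((m : ℤ) * u + i) := by
  have hN : (0:ℤ) < (k : ℤ) * u := by positivity
  have h₀ : 0 ≤ n % ((k : ℤ) * u) := Int.emod_nonneg n hN.ne'
  have h₁ : n % ((k : ℤ) * u) < (k : ℤ) * u := Int.emod_lt_of_pos n hN
  have hq0 : 0 ≤ n % ((k : ℤ) * u) / u := Int.ediv_nonneg h₀ hu.le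
  have hqk : n % ((k : ℤ) * u) / u < (k : ℤ) := by
    rw [Int.ediv_lt_iff_lt_mul hu]; exact h₁
  refine ⟨n / ((k : ℤ) * u), n % ((k : ℤ) * u) % u, (n % ((k : ℤ) * u) / u).toNat, ?_, ?_, ?_, ?_⟩
  · omega
  · exact Int.emod_nonneg _ hu.ne'
  · exact Int.emod_lt_of_pos _ hu
  · have e3 : ((n % ((k : ℤ) * u) / u).toNat : ℤ) = n % ((k : ℤ) * u) / u :=
      Int.toNat_of_nonneg hq0
    have e1 := Int.mul_ediv_add_emod n ((k : ℤ) * u)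
    have e2 := Int.mul_ediv_add_emod (n % ((k : ℤ) * u)) u
    rw [e3]
    linear_combination - e1 - e2

lemma eval (k : ℕ) (s u : ℤ) (t : ℕ) (c : ℕ → ℤ) (hu : 0 < u)
    (j i : ℤ) (m : ℕ) (hm : m < k) (h0 : 0 ≤ i) (hiu : i < u) :
    rayFun k s u t c (j * ((k : ℤ) * u) + ((m : ℤ) * u + i))
      = (c m + j * s + epsF t m * i, (m : ZMod k)) := by
  have hk : 0 < k := by omega
  have hN : (0:ℤ) < (k : ℤ) * u := by positivity
  have hR0 : 0 ≤ (m : ℤ) * u + i := by positivity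
  have hmk : ((m : ℤ) + 1) ≤ (k : ℤ) := by exact_mod_cast hm
  have hRN : (m : ℤ) * u + i < (k : ℤ) * u := by nlinarith
  have hmod : (j * ((k : ℤ) * u) + ((m : ℤ) * u + i)) % ((k : ℤ) * u) = (m : ℤ) * u + i := by
    rw [add_comm (j * ((k : ℤ) * u)), mul_comm j ((k : ℤ) * u), Int.add_mul_emod_self_left,
      Int.emod_eq_of_lt hR0 hRN]
  have hdiv : (j * ((k : ℤ) * u) + ((m : ℤ) * u + i)) / ((k : ℤ) * u) = j := by
    have e1 := Int.mul_ediv_add_emod (j * ((k : ℤ) * u) + ((m : ℤ) * u + i)) ((k : ℤ) * u)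
    rw [hmod] at e1
    have h2 : ((k : ℤ) * u) * ((j * ((k : ℤ) * u) + ((m : ℤ) * u + i)) / ((k : ℤ) * u))
        = ((k : ℤ) * u) * j := by linear_combination e1
    exact mul_left_cancel₀ hN.ne' h2
  have hmod2 : ((m : ℤ) * u + i) % u = i := by
    rw [add_comm, mul_comm, Int.add_mul_emod_self_left, Int.emod_eq_of_lt h0 hiu]
  have hdiv2 : ((m : ℤ) * u + i) / u = (m : ℤ) := by
    rw [add_comm, mul_comm, Int.add_mul_ediv_left i (m : ℤ) hu.ne',
      Int.ediv_eq_zero_of_lt h0 hiu, zero_add]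
  simp only [rayFun, hmod, hdiv, hmod2, hdiv2, Int.toNat_natCast]

section Ray

variable (k : ℕ) (l s u : ℤ) (t : ℕ) (c : ℕ → ℤ)

lemma cpar (hu : Even u) (hc0 : Odd (c 0))
    (hrec : ∀ m, c (m+1) = c m + epsF t m * (u - 1)) :
    ∀ m : ℕ, Odd (c m + (m : ℤ)) := by
  intro m
  induction m with
  | zero => simpa using hc0
  | succ m ih =>
    have h1 : c (m+1) + ((m+1 : ℕ) : ℤ) = (c m + (m : ℤ)) + (epsF t m * (u - 1) + 1) := by
      rw [hrec m]; push_cast; ring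
    rw [h1]
    refine ih.add_even ?_
    rcases epsF_pm t m with h | h <;> rw [h]
    · simpa using hu
    · have : (-1) * (u - 1) + 1 = 2 - u := by ring
      rw [this]
      exact (even_two.sub hu)

lemma ray_adj (hk : 2 ≤ k) (hs : Even s) (hu : Even u) (hu2 : 2 ≤ u)
    (hc0 : Odd (c 0)) (hrec : ∀ m, c (m+1) = c m + epsF t m * (u - 1))
    (hclose : c k + l = c 0 + s) (n : ℤ) :
    (twistedCylinder k l).Adj (rayFun k s u t c n) (rayFun k s u t c (n+1)) := by
  haveI : NeZero k := ⟨by omega⟩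
  have hu0 : (0:ℤ) < u := by omega
  obtain ⟨j, i, m, hm, h0, hiu, hn⟩ := decomp k u (by omega) hu0 n
  rw [hn]
  have hpar := cpar u t c hu hc0 hrec
  by_cases hcase : i + 1 < u
  · -- horizontal step
    have h2 : j * ((k : ℤ) * u) + ((m : ℤ) * u + i) + 1
        = j * ((k : ℤ) * u) + ((m : ℤ) * u + (i+1)) := by ring
    rw [h2, eval k s u t c hu0 j i m hm h0 hiu,
      eval k s u t c hu0 j (i+1) m hm (by omega) hcase]
    constructor
    · intro hEq
      rw [Prod.mk.injEq] at hEq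
      have := hEq.1
      rcases epsF_pm t m with h | h <;> rw [h] at this <;> linarith
    · rcases epsF_pm t m with h | h
      · exact Or.inl (Or.inl ⟨by rw [h]; ring, rfl⟩)
      · exact Or.inr (Or.inl ⟨by rw [h]; ring, rfl⟩)
  · have hi : i = u - 1 := by omega
    by_cases hm1 : m + 1 < k
    · -- vertical step
      have h2 : j * ((k : ℤ) * u) + ((m : ℤ) * u + i) + 1
          = j * ((k : ℤ) * u) + (((m+1 : ℕ) : ℤ) * u + 0) := by push_cast; rw [hi]; ring
      rw [h2, eval k s u t c hu0 j i m hm h0 hiu,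
        eval k s u t c hu0 j 0 (m+1) hm1 le_rfl hu0]
      have hpc : c m + j * s + epsF t m * i = c (m+1) + j * s := by
        rw [hi, hrec m]; ring
      rw [hpc]
      have hq : c (m+1) + j * s + epsF t (m+1) * 0 = c (m+1) + j * s := by ring
      rw [hq]
      set X := c (m+1) + j * s with hX
      have hXm : Even (X + (m : ℤ)) := by
        obtain ⟨r, hr⟩ := hpar (m+1)
        have hcm : Even (c (m+1) + (m : ℤ)) := by
          refine ⟨r - 0, ?_⟩
          push_cast at hr
          linarith
        have : X + (m : ℤ) = (c (m+1) + (m : ℤ)) + j * s := by rw [hX]; ring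
        rw [this]
        exact hcm.add (hs.mul_left j)
      constructor
      · intro hEq
        rw [Prod.mk.injEq] at hEq
        have h3 := congrArg ZMod.val hEq.2
        rw [ZMod.val_cast_of_lt hm, ZMod.val_cast_of_lt hm1] at h3
        omega
      · left; right; left
        rcases Nat.even_or_odd m with hme | hmo
        · have hXe : Even X := by
            have h4 : Even ((m : ℤ)) := by exact_mod_cast hme
            have : X = (X + (m : ℤ)) - (m : ℤ) := by ring
            rw [this]
            exact hXm.sub h4
          obtain ⟨d, hd⟩ := hXe
          exact ⟨d, m, by omega, Or.inl ⟨hme,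
            by rw [Prod.mk.injEq]; exact ⟨by omega, rfl⟩,
            by rw [Prod.mk.injEq]; exact ⟨by omega, rfl⟩⟩⟩
        · have hXo : Odd X := by
            have h4 : Odd ((m : ℤ)) := by exact_mod_cast hmo
            have : X = (X + (m : ℤ)) - (m : ℤ) := by ring
            rw [this]
            exact hXm.sub_odd h4
          obtain ⟨d, hd⟩ := hXo
          exact ⟨d, m, by omega, Or.inr ⟨hmo,
            by rw [Prod.mk.injEq]; exact ⟨by omega, rfl⟩,
            by rw [Prod.mk.injEq]; exact ⟨by omega, rfl⟩⟩⟩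
    · -- twist step
      have hmk : m + 1 = k := by omega
      have hmz : (m : ℤ) = (k : ℤ) - 1 := by
        have : ((m+1 : ℕ) : ℤ) = (k : ℤ) := by exact_mod_cast congrArg (Nat.cast (R := ℤ)) hmk
        push_cast at this
        linarith
      have h2 : j * ((k : ℤ) * u) + ((m : ℤ) * u + i) + 1
          = (j+1) * ((k : ℤ) * u) + (((0 : ℕ) : ℤ) * u + 0) := by
        push_cast; rw [hi, hmz]; ring
      rw [h2, eval k s u t c hu0 j i m hm h0 hiu,
        eval k s u t c hu0 (j+1) 0 0 (by omega) le_rfl hu0]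
      have hpc : c m + j * s + epsF t m * i = c k + j * s := by
        rw [hi, ← hmk, hrec m]; ring
      rw [hpc]
      set X := c k + j * s with hX
      have hq : c 0 + (j+1) * s + epsF t 0 * 0 = X + l := by
        rw [hX]; linear_combination - hclose
      rw [hq]
      have hmm : m = k - 1 := by omega
      have hXk : Odd (X + (k : ℤ)) := by
        have : X + (k : ℤ) = (c k + (k : ℤ)) + j * s := by rw [hX]; ring
        rw [this]
        exact (hpar k).add_even (hs.mul_left j)
      constructor
      · intro hEq
        rw [Prod.mk.injEq] at hEq
        have h3 := congrArg ZMod.val hEq.2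
        rw [ZMod.val_cast_of_lt hm, Nat.cast_zero, ZMod.val_zero] at h3
        omega
      · left; right; right
        rcases Nat.even_or_odd k with hke | hko
        · have hXo : Odd X := by
            have h4 : Even ((k : ℤ)) := by exact_mod_cast hke
            have : X = (X + (k : ℤ)) - (k : ℤ) := by ring
            rw [this]
            exact hXk.sub_even h4
          obtain ⟨d, hd⟩ := hXo
          refine Or.inl ⟨hke, d, ?_, ?_⟩
          · rw [Prod.mk.injEq]
            exact ⟨by omega, by rw [hmm]⟩
          · rw [Prod.mk.injEq]
            exact ⟨by omega, by simp⟩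
        · have hXe : Even X := by
            have h4 : Odd ((k : ℤ)) := by exact_mod_cast hko
            have : X = (X + (k : ℤ)) - (k : ℤ) := by ring
            rw [this]
            exact hXk.sub_odd h4
          obtain ⟨d, hd⟩ := hXe
          refine Or.inr ⟨hko, d, ?_, ?_⟩
          · rw [Prod.mk.injEq]
            exact ⟨by omega, by rw [hmm]⟩
          · rw [Prod.mk.injEq]
            exact ⟨by omega, by simp⟩

lemma cancel (s : ℤ) (hs : 0 < s) {j j' x x' : ℤ} (hx : 0 ≤ x) (hxs : x < s)
    (hx' : 0 ≤ x') (hxs' : x' < s) (h : j * s + x = j' * s + x') : j = j' ∧ x = x' := by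
  have hd : (j - j') * s = x' - x := by linear_combination h
  have hjj : j - j' = 0 := by
    rcases lt_trichotomy (j - j') 0 with hlt | heq | hgt
    · have h2 : (j - j') * s ≤ (-1) * s := mul_le_mul_of_nonneg_right (by omega) hs.le
      have h3 : (-1 : ℤ) * s = -s := by ring
      rw [h3] at h2
      linarith
    · exact heq
    · have h2 : 1 * s ≤ (j - j') * s := mul_le_mul_of_nonneg_right (by omega) hs.le
      have h3 : (1 : ℤ) * s = s := by ring
      rw [h3] at h2
      linarith
  constructor
  · omega
  · rw [hjj] at hd
    linarith [hd]

lemma no_mult (s x e : ℤ) (hs : 0 < s) (h1 : -s < x) (h2 : x < 0) (h : x = s * e) : False := by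
  rcases lt_trichotomy e 0 with h3 | h3 | h3
  · have h4 : s * e ≤ s * (-1) := mul_le_mul_of_nonneg_left (by omega) hs.le
    have h5 : s * (-1 : ℤ) = -s := by ring
    linarith
  · rw [h3] at h
    linarith
  · have h4 : s * 1 ≤ s * e := mul_le_mul_of_nonneg_left (by omega) hs.le
    linarith

lemma ray_inj (hk : 2 ≤ k) (hu2 : 2 ≤ u) (hus : u + 2 ≤ s) :
    Function.Injective (rayFun k s u t c) := by
  intro n n' h
  have hu0 : (0:ℤ) < u := by omega
  have hs0 : (0:ℤ) < s := by omega
  obtain ⟨j, i, m, hm, h0, hiu, hn⟩ := decomp k u (by omega) hu0 n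
  obtain ⟨j', i', m', hm', h0', hiu', hn'⟩ := decomp k u (by omega) hu0 n'
  rw [hn, hn', eval k s u t c hu0 j i m hm h0 hiu,
    eval k s u t c hu0 j' i' m' hm' h0' hiu'] at h
  rw [Prod.mk.injEq] at h
  have hmm : m = m' := by
    have h3 := congrArg ZMod.val h.2
    rw [ZMod.val_cast_of_lt hm, ZMod.val_cast_of_lt hm'] at h3
    exact h3
  subst hmm
  have hcol := h.1
  have hji : j = j' ∧ i = i' := by
    rcases epsF_pm t m with h1 | h1 <;> rw [h1] at hcol
    · exact cancel s hs0 h0 (by omega) h0' (by omega) (by linear_combination hcol)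
    · have := cancel s hs0 h0' (by omega) h0 (by omega)
        (show j * s + i' = j' * s + i by linear_combination hcol)
      exact ⟨this.1, this.2.symm⟩
  rw [hn, hn', hji.1, hji.2]

lemma ray_mem_range (hk : 2 ≤ k) (hu2 : 2 ≤ u) (x : ℤ) (μ : ZMod k) :
    (x, μ) ∈ Set.range (rayFun k s u t c) ↔
      ∃ m : ℕ, m < k ∧ μ = (m : ZMod k) ∧
        ∃ i j : ℤ, 0 ≤ i ∧ i < u ∧ x = c m + j * s + epsF t m * i := by
  have hu0 : (0:ℤ) < u := by omega
  constructor
  · rintro ⟨n, hn⟩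
    obtain ⟨j, i, m, hm, h0, hiu, hdec⟩ := decomp k u (by omega) hu0 n
    rw [hdec, eval k s u t c hu0 j i m hm h0 hiu] at hn
    rw [Prod.mk.injEq] at hn
    exact ⟨m, hm, hn.2.symm, i, j, h0, hiu, hn.1.symm⟩
  · rintro ⟨m, hm, hμ, i, j, h0, hiu, hx⟩
    exact ⟨j * ((k:ℤ)*u) + ((m:ℤ)*u + i),
      by rw [eval k s u t c hu0 j i m hm h0 hiu, hx, hμ]⟩

end Ray

lemma hab_half (s w : ℤ) (t : ℕ) (h2w : s = 2 * w) (m : ℕ) :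
    s ∣ colRec (1 + epsF t 0 * w) (fun r => epsF t r * (s - w - 1)) m
      - colRec 1 (fun r => epsF t r * (w - 1)) m - epsF t m * w := by
  subst h2w
  have hsum : (∑ r ∈ Finset.range m, epsF t r * (2 * w - w - 1))
      = ∑ r ∈ Finset.range m, epsF t r * (w - 1) :=
    Finset.sum_congr rfl (fun r _ => by ring)
  have hexpr : colRec (1 + epsF t 0 * w) (fun r => epsF t r * (2 * w - w - 1)) m
      - colRec 1 (fun r => epsF t r * (w - 1)) m - epsF t m * w
      = (epsF t 0 - epsF t m) * w := by
    rw [colRec_eq_sum, colRec_eq_sum, hsum]; ring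
  rw [hexpr]
  rcases epsF_pm t 0 with h1 | h1 <;> rcases epsF_pm t m with h2 | h2 <;> rw [h1, h2]
  · exact ⟨0, by ring⟩
  · exact ⟨1, by ring⟩
  · exact ⟨-1, by ring⟩
  · exact ⟨0, by ring⟩

lemma epsF_zero (r : ℕ) : epsF 0 r = (-1 : ℤ)^r := by simp [epsF]

lemma hab_alt (s w : ℤ) (m : ℕ) :
    s ∣ colRec (1 + epsF 0 0 * w) (fun r => epsF 0 r * (s - w - 1)) m
      - colRec 1 (fun r => epsF 0 r * (w - 1)) m - epsF 0 m * w := by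
  have hsum : (∑ r ∈ Finset.range m, epsF 0 r * (s - w - 1))
      - (∑ r ∈ Finset.range m, epsF 0 r * (w - 1))
      = (∑ r ∈ Finset.range m, (-1 : ℤ)^r) * (s - 2 * w) := by
    rw [← Finset.sum_sub_distrib, Finset.sum_mul]
    exact Finset.sum_congr rfl (fun r _ => by rw [epsF_zero]; ring)
  have hexpr : colRec (1 + epsF 0 0 * w) (fun r => epsF 0 r * (s - w - 1)) m
      - colRec 1 (fun r => epsF 0 r * (w - 1)) m - epsF 0 m * w
      = w + (∑ r ∈ Finset.range m, (-1 : ℤ)^r) * (s - 2 * w) - (-1)^m * w := by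
    rw [colRec_eq_sum, colRec_eq_sum, epsF_zero, epsF_zero]
    simp only [pow_zero]
    linear_combination hsum
  rw [hexpr, altsum]
  rcases Nat.even_or_odd m with hme | hmo
  · rw [if_pos hme, hme.neg_one_pow]
    exact ⟨0, by ring⟩
  · rw [if_neg (Nat.not_even_iff_odd.mpr hmo), hmo.neg_one_pow]
    exact ⟨1, by ring⟩

lemma two_rays (k : ℕ) (l s w : ℤ) (t : ℕ)
    (hk : 2 ≤ k) (hs : Even s) (hw : Even w) (hw2 : 2 ≤ w) (hws : w + 2 ≤ s)
    (hT : (∑ m ∈ Finset.range k, epsF t m) * (w - 1) + l = s)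
    (hT' : (∑ m ∈ Finset.range k, epsF t m) * (s - w - 1) + l = s)
    (hab : ∀ m : ℕ, m < k → (s ∣ colRec (1 + epsF t 0 * w) (fun r => epsF t r * (s - w - 1)) m
        - colRec 1 (fun r => epsF t r * (w - 1)) m - epsF t m * w)) :
    ∃ f₁ f₂ : ℤ → ℤ × ZMod k,
      Function.Injective f₁ ∧ Function.Injective f₂ ∧
      (∀ n : ℤ, (twistedCylinder k l).Adj (f₁ n) (f₁ (n + 1))) ∧
      (∀ n : ℤ, (twistedCylinder k l).Adj (f₂ n) (f₂ (n + 1))) ∧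
      Disjoint (Set.range f₁) (Set.range f₂) ∧
      Set.range f₁ ∪ Set.range f₂ = Set.univ := by
  haveI : NeZero k := ⟨by omega⟩
  have hs0 : (0:ℤ) < s := by omega
  set a : ℕ → ℤ := colRec 1 (fun r => epsF t r * (w - 1)) with ha
  set b : ℕ → ℤ := colRec (1 + epsF t 0 * w) (fun r => epsF t r * (s - w - 1)) with hb
  have hrecA : ∀ m, a (m+1) = a m + epsF t m * (w - 1) := fun m => rfl
  have hrecB : ∀ m, b (m+1) = b m + epsF t m * (s - w - 1) := fun m => rfl
  have ha0 : a 0 = 1 := rfl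
  have hb0 : b 0 = 1 + epsF t 0 * w := rfl
  have hcloseA : a k + l = a 0 + s := by
    have h1 : a k = 1 + (∑ r ∈ Finset.range k, epsF t r) * (w - 1) := by
      rw [ha, colRec_eq_sum, Finset.sum_mul]
    rw [h1, ha0]
    linarith [hT]
  have hcloseB : b k + l = b 0 + s := by
    have h1 : b k = (1 + epsF t 0 * w) + (∑ r ∈ Finset.range k, epsF t r) * (s - w - 1) := by
      rw [hb, colRec_eq_sum, Finset.sum_mul]
    rw [h1, hb0]
    linarith [hT']
  have hc0A : Odd (a 0) := by rw [ha0]; exact odd_one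
  have hc0B : Odd (b 0) := by
    rw [hb0]
    exact odd_one.add_even (hw.mul_left _)
  have hwB : Even (s - w) := hs.sub hw
  have hw2B : (2:ℤ) ≤ s - w := by omega
  have hwsB : (s - w) + 2 ≤ s := by omega
  refine ⟨rayFun k s w t a, rayFun k s (s - w) t b,
    ray_inj k s w t a hk hw2 hws,
    ray_inj k s (s - w) t b hk hw2B hwsB,
    ray_adj k l s w t a hk hs hw hw2 hc0A hrecA hcloseA,
    ray_adj k l s (s - w) t b hk hs hwB hw2B hc0B hrecB hcloseB,
    ?_, ?_⟩
  · rw [Set.disjoint_left]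
    rintro ⟨x, μ⟩ h1 h2
    rw [ray_mem_range k s w t a hk hw2] at h1
    rw [ray_mem_range k s (s - w) t b hk hw2B] at h2
    obtain ⟨m, hm, hμ, i, j, h0, hiu, hx⟩ := h1
    obtain ⟨m', hm', hμ', i', j', h0', hiu', hx'⟩ := h2
    have hmm : m = m' := by
      have h3 := congrArg ZMod.val (hμ.symm.trans hμ')
      rw [ZMod.val_cast_of_lt hm, ZMod.val_cast_of_lt hm'] at h3
      exact h3
    subst hmm
    obtain ⟨dd, hdd⟩ := hab m hm
    rcases epsF_pm t m with h1 | h1 <;> rw [h1] at hx hx' hdd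
    · exact no_mult s (i - (w + i')) (j' - j + dd) hs0 (by linarith) (by linarith)
        (by linear_combination hx' - hx + hdd)
    · exact no_mult s (i - (w + i')) (j - j' - dd) hs0 (by linarith) (by linarith)
        (by linear_combination hx - hx' - hdd)
  · rw [Set.eq_univ_iff_forall]
    rintro ⟨x, μ⟩
    set m := μ.val with hmdef
    have hm : m < k := ZMod.val_lt μ
    have hμ : μ = (m : ZMod k) := (ZMod.natCast_rightInverse μ).symm
    set D := epsF t m * (x - a m) with hD
    set d := D % s with hd
    set j₀ := D / s with hj₀
    have hd0 : 0 ≤ d := Int.emod_nonneg _ hs0.ne'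
    have hds : d < s := Int.emod_lt_of_pos _ hs0
    have hDe : s * j₀ + d = D := Int.mul_ediv_add_emod D s
    have hsq := epsF_sq t m
    have hxa : x = a m + (epsF t m * j₀) * s + epsF t m * d := by
      linear_combination (- epsF t m) * hDe + (- epsF t m) * hD + (-(x - a m)) * hsq
    by_cases hdw : d < w
    · left
      rw [ray_mem_range k s w t a hk hw2]
      exact ⟨m, hm, hμ, d, epsF t m * j₀, hd0, hdw, hxa⟩
    · right
      rw [ray_mem_range k s (s - w) t b hk hw2B]
      obtain ⟨dd, hdd⟩ := hab m hm
      exact ⟨m, hm, hμ, d - w, epsF t m * j₀ - dd, by omega, by omega,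
        by linear_combination hxa - hdd⟩




end TwoRays

/-- The twisted cubic cylinder `W̄_{k,l}` contains two vertex-disjoint double rays
whose vertex sets together partition the whole vertex set. -/
theorem cylinder_two_spanning_double_rays (k l : ℕ) (hk : 2 ≤ k) (hkl : Even (k + l)) :
    ∃ f₁ f₂ : ℤ → ℤ × ZMod k,
      Function.Injective f₁ ∧ Function.Injective f₂ ∧
      (∀ n : ℤ, (twistedCylinder k (l : ℤ)).Adj (f₁ n) (f₁ (n + 1))) ∧
      (∀ n : ℤ, (twistedCylinder k (l : ℤ)).Adj (f₂ n) (f₂ (n + 1))) ∧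
      Disjoint (Set.range f₁) (Set.range f₂) ∧
      Set.range f₁ ∪ Set.range f₂ = Set.univ := by
  have hkl2 : (k + l) % 2 = 0 := Nat.even_iff.mp hkl
  by_cases hk2 : k = 2
  · -- two horizontal rows
    subst hk2
    refine ⟨fun n => (n, 0), fun n => (n, 1), ?_, ?_, ?_, ?_, ?_, ?_⟩
    · intro x y h
      exact congrArg Prod.fst h
    · intro x y h
      exact congrArg Prod.fst h
    · intro n
      refine ⟨?_, Or.inl (Or.inl ⟨rfl, rfl⟩)⟩
      intro h
      rw [Prod.mk.injEq] at h
      omega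
    · intro n
      refine ⟨?_, Or.inl (Or.inl ⟨rfl, rfl⟩)⟩
      intro h
      rw [Prod.mk.injEq] at h
      omega
    · rw [Set.disjoint_left]
      rintro ⟨x, μ⟩ ⟨n1, h1⟩ ⟨n2, h2⟩
      rw [Prod.mk.injEq] at h1 h2
      have : (0 : ZMod 2) = 1 := h1.2.trans h2.2.symm
      exact absurd this (by decide)
    · rw [Set.eq_univ_iff_forall]
      rintro ⟨x, μ⟩
      have hμ : μ = 0 ∨ μ = 1 := by revert μ; decide
      rcases hμ with h | h
      · exact Or.inl ⟨x, by rw [h]⟩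
      · exact Or.inr ⟨x, by rw [h]⟩
  · have hk3 : 3 ≤ k := by omega
    rcases Nat.even_or_odd k with hke | hko
    · -- k even, hence l even
      have hkE : k % 2 = 0 := Nat.even_iff.mp hke
      have hlE : l % 2 = 0 := by omega
      have hk4 : 4 ≤ k := by omega
      by_cases hl4 : 4 ≤ l
      · -- large twist : s = l, w = 2, t = 0, alternating directions
        refine TwoRays.two_rays k (l : ℤ) (l : ℤ) 2 0 hk ?_ (by decide) (by norm_num)
          (by exact_mod_cast hl4) ?_ ?_ (fun m _ => TwoRays.hab_alt (l : ℤ) 2 m)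
        · exact (Int.even_coe_nat l).mpr (Nat.even_iff.mpr hlE)
        · rw [TwoRays.epsF_sum 0 k (by omega) (by rw [Nat.even_iff]; omega)]
          push_cast
          ring
        · rw [TwoRays.epsF_sum 0 k (by omega) (by rw [Nat.even_iff]; omega)]
          push_cast
          ring
      · -- l = 0 or l = 2 : s = 4, w = 2, t = 4 - l
        have hl02 : l = 0 ∨ l = 2 := by omega
        have ht : (4 - l) ≤ k := by omega
        have htev : Even (k - (4 - l)) := by
          rw [Nat.even_iff]; omega
        refine TwoRays.two_rays k (l : ℤ) 4 2 (4 - l) hk (by decide) (by decide)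
          (by norm_num) (by norm_num) ?_ ?_
          (fun m _ => TwoRays.hab_half 4 2 (4 - l) (by norm_num) m)
        · rw [TwoRays.epsF_sum (4 - l) k ht htev]
          rcases hl02 with h | h <;> subst h <;> norm_num
        · rw [TwoRays.epsF_sum (4 - l) k ht htev]
          rcases hl02 with h | h <;> subst h <;> norm_num
    · -- k odd, hence l odd
      have hkO : k % 2 = 1 := Nat.odd_iff.mp hko
      have hlO : l % 2 = 1 := by omega
      by_cases hl3 : 3 ≤ l
      · -- s = 2l - 2, w = l - 1, t = 1
        have hwE : Even ((l : ℤ) - 1) := by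
          rw [Int.even_sub_one]
          simpa [Int.even_coe_nat, Nat.even_iff] using hlO
        refine TwoRays.two_rays k (l : ℤ) (2 * (l : ℤ) - 2) ((l : ℤ) - 1) 1 hk
          ?_ hwE (by omega) ?_ ?_ ?_
          (fun m _ => TwoRays.hab_half (2 * (l : ℤ) - 2) ((l : ℤ) - 1) 1 (by ring) m)
        · have : (2 * (l : ℤ) - 2) = ((l : ℤ) - 1) + ((l : ℤ) - 1) := by ring
          exact ⟨(l : ℤ) - 1, this⟩
        · have : (3 : ℤ) ≤ (l : ℤ) := by exact_mod_cast hl3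
          linarith
        · rw [TwoRays.epsF_sum 1 k (by omega) ?_]
          · push_cast; ring
          · rw [Nat.even_iff]; omega
        · rw [TwoRays.epsF_sum 1 k (by omega) ?_]
          · push_cast; ring
          · rw [Nat.even_iff]; omega
      · -- l = 1 : s = 4, w = 2, t = 3
        have hl1 : l = 1 := by omega
        subst hl1
        have htev : Even (k - 3) := by
          rw [Nat.even_iff]; omega
        refine TwoRays.two_rays k 1 4 2 3 hk (by decide) (by decide)
          (by norm_num) (by norm_num) ?_ ?_
          (fun m _ => TwoRays.hab_half 4 2 3 (by norm_num) m)
        · rw [TwoRays.epsF_sum 3 k (by omega) htev]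
          norm_num
        · rw [TwoRays.epsF_sum 3 k (by omega) htev]
          norm_num
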